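/- Let (i,j) be an index pair with j < n, and let (V_{k,l}) be a point of SpR_{2n} lying in Z_{i,j} and in no Z_{k,l} with (k,l) ≠ (i,j). Then for every index pair (k,l) with l > j one has V_{k,l} ∩ span(w_{l+1}, …, w_{2n}) = 0 (equivalently, the Plücker coordinate p_{1,…,k} of V_{k,l} is nonzero). -/

import Mathlib

noncomputable section

/-- The ambient 2n-dimensional complex vector space `W = ℂ^{2n}`. -/
abbrev Wsp (n : ℕ) := Fin (2*n) → ℂ

/-- The basis vector `w_k` (1-based index `k ∈ {1,…,2n}`). -/
def wvec (n k : ℕ) : Wsp n := fun i => if (i : ℕ) + 1 = k then 1 else 0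

/-- The standard symplectic form: `⟨w_i, w_{2n+1-i}⟩ = 1` for `1 ≤ i ≤ n`,
and `⟨w_i, w_j⟩ = 0` for `j ≠ 2n+1-i`. -/
def sform (n : ℕ) (x y : Wsp n) : ℂ :=
  ∑ i : Fin (2*n), (if (i : ℕ) < n then 1 else -1) * x i *
    y ⟨2*n - 1 - (i : ℕ), by have := i.isLt; omega⟩

/-- A subspace is isotropic if the symplectic form vanishes on it. -/
def IsIsotropic (n : ℕ) (U : Submodule ℂ (Wsp n)) : Prop :=
  ∀ u ∈ U, ∀ v ∈ U, sform n u v = 0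

/-- The projection `pr_k` along `w_k` (1-based). -/
def prj (n k : ℕ) : Wsp n →ₗ[ℂ] Wsp n where
  toFun x := fun i => if (i : ℕ) + 1 = k then 0 else x i
  map_add' x y := by funext i; by_cases h : (i : ℕ) + 1 = k <;> simp [h]
  map_smul' c x := by funext i; by_cases h : (i : ℕ) + 1 = k <;> simp [h]

/-- The subspace `W_{i,j} = span(w_1,…,w_i,w_{j+1},…,w_{2n})` (1-based). -/
def WIJ (n i j : ℕ) : Submodule ℂ (Wsp n) :=
  Submodule.span ℂ (wvec n '' {k | (1 ≤ k ∧ k ≤ i) ∨ (j + 1 ≤ k ∧ k ≤ 2*n)})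

/-- Orthogonal complement with respect to the symplectic form. -/
def sperp (n : ℕ) (U : Submodule ℂ (Wsp n)) : Submodule ℂ (Wsp n) where
  carrier := {x | ∀ u ∈ U, sform n x u = 0}
  zero_mem' := by intro u hu; simp [sform]
  add_mem' := by
    intro a b ha hb u hu
    have ha' := ha u hu
    have hb' := hb u hu
    simp only [sform, Pi.add_apply, add_mul, mul_add, Finset.sum_add_distrib] at *
    rw [ha', hb', add_zero]
  smul_mem' := by
    intro c a ha u hu
    have ha' := ha u hu
    simp only [sform, Pi.smul_apply, smul_eq_mul] at *
    calc ∑ i : Fin (2*n), (if (i : ℕ) < n then 1 else -1) * (c * a i) *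
          u ⟨2*n - 1 - (i : ℕ), by have := i.isLt; omega⟩
        = c * ∑ i : Fin (2*n), (if (i : ℕ) < n then 1 else -1) * a i *
          u ⟨2*n - 1 - (i : ℕ), by have := i.isLt; omega⟩ := by
          rw [Finset.mul_sum]; congr 1; funext i; ring
      _ = 0 := by rw [ha', mul_zero]

/-- The points of the Bott–Samelson type resolution `SpR_{2n}`:
collections `(V_{i,j})` for `1 ≤ i ≤ j`, `i+j ≤ 2n`. -/
structure IsSpR (n : ℕ) (V : ℕ → ℕ → Submodule ℂ (Wsp n)) : Prop where
  dim : ∀ i j, 1 ≤ i → i ≤ j → i + j ≤ 2*n → Module.finrank ℂ (V i j) = i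
  sub : ∀ i j, 1 ≤ i → i ≤ j → i + j ≤ 2*n → V i j ≤ WIJ n i j
  mono : ∀ i j, 1 ≤ i → i + 1 ≤ j → (i + 1) + j ≤ 2*n → V i j ≤ V (i+1) j
  proj : ∀ i j, 1 ≤ i → i ≤ j → i + (j+1) ≤ 2*n →
    Submodule.map (prj n (j+1)) (V i j) ≤ V i (j+1)
  isot : ∀ i, 1 ≤ i → i ≤ n → IsIsotropic n (V i (2*n - i))

/-- A point of `SpR_{2n}` lies in the divisor `Z_{i,j}` if
`V_{i,j} = V_{i-1,j+1} + ℂ w_{j+1}` (with `V_0 = 0`). -/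
def InZ (n : ℕ) (V : ℕ → ℕ → Submodule ℂ (Wsp n)) (i j : ℕ) : Prop :=
  V i j = (if i = 1 then ⊥ else V (i-1) (j+1)) ⊔ Submodule.span ℂ {wvec n (j+1)}

/-- Submodule of vectors whose coordinates in `[i, j)` (0-based) vanish. -/
def coordZ (n i j : ℕ) : Submodule ℂ (Wsp n) where
  carrier := {x | ∀ a : Fin (2*n), i ≤ (a:ℕ) → (a:ℕ) < j → x a = 0}
  zero_mem' := by intro a _ _; rfl
  add_mem' := by intro x y hx hy a h1 h2; simp [Pi.add_apply, hx a h1 h2, hy a h1 h2]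
  smul_mem' := by intro c x hx a h1 h2; simp [Pi.smul_apply, hx a h1 h2]

lemma sum_wvec (n : ℕ) (x : Wsp n) : x = ∑ a : Fin (2*n), x a • wvec n ((a:ℕ)+1) := by
  funext b
  rw [Finset.sum_apply, Finset.sum_eq_single b]
  · simp [wvec]
  · intro a _ hab
    simp only [Pi.smul_apply, wvec, smul_eq_mul]
    rw [if_neg (fun h => hab (Fin.ext (by omega)))]
    ring
  · intro h; exact absurd (Finset.mem_univ b) h

lemma WIJ_eq_coordZ (n i j : ℕ) : WIJ n i j = coordZ n i j := by
  apply le_antisymm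
  · rw [WIJ, Submodule.span_le]
    rintro _ ⟨k, hk, rfl⟩
    intro a h1 h2
    simp only [wvec]
    rw [if_neg]
    intro h
    rcases hk with ⟨hk1, hk2⟩ | ⟨hk1, hk2⟩ <;> omega
  · intro x hx
    rw [sum_wvec n x]
    apply Submodule.sum_mem
    intro a _
    by_cases h : i ≤ (a:ℕ) ∧ (a:ℕ) < j
    · rw [hx a h.1 h.2, zero_smul]; exact Submodule.zero_mem _
    · exact Submodule.smul_mem _ _ (Submodule.subset_span ⟨(a:ℕ)+1, by push_neg at h; rcases Nat.lt_or_ge (a:ℕ) i with h' | h' <;> [left; right] <;> constructor <;> omega, rfl⟩)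

lemma mem_WIJ (n i j : ℕ) (x : Wsp n) :
    x ∈ WIJ n i j ↔ ∀ a : Fin (2*n), i ≤ (a:ℕ) → (a:ℕ) < j → x a = 0 := by
  rw [WIJ_eq_coordZ]; rfl

lemma prj_apply (n k : ℕ) (x : Wsp n) (a : Fin (2*n)) :
    prj n k x a = if (a:ℕ) + 1 = k then 0 else x a := rfl

lemma prj_decomp (n l : ℕ) (hl : l < 2*n) (x : Wsp n) :
    x = prj n (l+1) x + x ⟨l, hl⟩ • wvec n (l+1) := by
  funext a
  simp only [Pi.add_apply, Pi.smul_apply, prj_apply, wvec, smul_eq_mul]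
  by_cases h : (a:ℕ) + 1 = l + 1
  · have ha : a = ⟨l, hl⟩ := Fin.ext (by show (a:ℕ) = l; omega)
    subst ha; simp
  · simp [h, show ¬ (a:ℕ) = l by omega]

lemma wvec_ne_zero (n l : ℕ) (hl : l < 2*n) : wvec n (l+1) ≠ 0 := by
  intro h
  have := congrFun h ⟨l, hl⟩
  simp [wvec] at this

lemma wvec_mem_span (n l : ℕ) : wvec n (l+1) ∈ Submodule.span ℂ {wvec n (l+1)} :=
  Submodule.mem_span_singleton_self _


section Aux

variable {n i j : ℕ} {V : ℕ → ℕ → Submodule ℂ (Wsp n)}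

lemma finrank_sup_span_le (U : Submodule ℂ (Wsp n)) (w : Wsp n) (hw : w ≠ 0) :
    Module.finrank ℂ (U ⊔ Submodule.span ℂ {w} : Submodule ℂ (Wsp n)) ≤ Module.finrank ℂ U + 1 := by
  have h := Submodule.finrank_sup_add_finrank_inf_eq U (Submodule.span ℂ {w})
  rw [finrank_span_singleton hw] at h
  omega

/-- Key lemma: if the point is in no `Z_{k,l}` with `l ≠ j`, then `w_{l+1} ∉ V_{k,l}` for `l ≠ j`. -/
lemma notw (hV : IsSpR n V)
    (hO : ∀ k l, 1 ≤ k → k ≤ l → k + l ≤ 2*n → (k, l) ≠ (i, j) → ¬ InZ n V k l) :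
    ∀ k l, 1 ≤ k → k ≤ l → k + l ≤ 2*n → l ≠ j → wvec n (l+1) ∉ V k l := by
  intro k
  induction k with
  | zero => intro l h; omega
  | succ k IH =>
    intro l _ hkl hsum hlj hw
    have hl2n : l < 2*n := by omega
    have hne : (k+1, l) ≠ (i, j) := by simp [Prod.ext_iff, hlj]
    have hwne : wvec n (l+1) ≠ 0 := wvec_ne_zero n l hl2n
    rcases Nat.eq_zero_or_pos k with hk0 | hk1
    · -- k+1 = 1 case
      subst hk0
      apply hO 1 l le_rfl hkl hsum (by simpa using hne)
      have hle : Submodule.span ℂ {wvec n (l+1)} ≤ V 1 l :=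
        (Submodule.span_singleton_le_iff_mem _ _).2 hw
      have : V 1 l = Submodule.span ℂ {wvec n (l+1)} := by
        refine (Submodule.eq_of_le_of_finrank_le hle ?_).symm
        rw [hV.dim 1 l le_rfl hkl hsum, finrank_span_singleton hwne]
      rw [InZ, if_pos rfl, bot_sup_eq]
      exact this
    · -- k ≥ 1 case
      by_cases hwk : wvec n (l+1) ∈ V k l
      · exact IH l hk1 (by omega) (by omega) hlj hwk
      · -- build InZ at (k+1, l)
        have hmono : V k l ≤ V (k+1) l := hV.mono k l hk1 hkl hsum
        have hsup_le : V k l ⊔ Submodule.span ℂ {wvec n (l+1)} ≤ V (k+1) l :=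
          sup_le hmono ((Submodule.span_singleton_le_iff_mem _ _).2 hw)
        have hdimk : Module.finrank ℂ (V k l) = k := hV.dim k l hk1 (by omega) (by omega)
        have hdimk1 : Module.finrank ℂ (V (k+1) l) = k + 1 := hV.dim (k+1) l (by omega) hkl hsum
        have hlt : V k l < V k l ⊔ Submodule.span ℂ {wvec n (l+1)} := by
          refine lt_of_le_of_ne le_sup_left (fun h => hwk ?_)
          rw [h]
          exact Submodule.mem_sup_right (Submodule.mem_span_singleton_self _)
        have hfr_lt := Submodule.finrank_lt_finrank_of_lt hlt
        rw [hdimk] at hfr_lt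
        have heq1 : V k l ⊔ Submodule.span ℂ {wvec n (l+1)} = V (k+1) l := by
          apply Submodule.eq_of_le_of_finrank_le hsup_le
          rw [hdimk1]; omega
        -- now V k l ≤ V k (l+1) ⊔ span
        have hproj : V k l ≤ V k (l+1) ⊔ Submodule.span ℂ {wvec n (l+1)} := by
          intro u hu
          rw [prj_decomp n l hl2n u]
          refine Submodule.add_mem _ ?_ ?_
          · exact Submodule.mem_sup_left (hV.proj k l hk1 (by omega) (by omega)
              (Submodule.mem_map_of_mem hu))
          · exact Submodule.smul_mem _ _ (Submodule.mem_sup_right (Submodule.mem_span_singleton_self _))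
        have hle2 : V (k+1) l ≤ V k (l+1) ⊔ Submodule.span ℂ {wvec n (l+1)} := by
          rw [← heq1]
          exact sup_le hproj le_sup_right
        have heq2 : V (k+1) l = V k (l+1) ⊔ Submodule.span ℂ {wvec n (l+1)} := by
          apply Submodule.eq_of_le_of_finrank_le hle2
          calc Module.finrank ℂ (V k (l+1) ⊔ Submodule.span ℂ {wvec n (l+1)} : Submodule ℂ (Wsp n))
              ≤ Module.finrank ℂ (V k (l+1)) + 1 := finrank_sup_span_le _ _ hwne
            _ ≤ k + 1 := by rw [hV.dim k (l+1) hk1 (by omega) (by omega)]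
            _ = Module.finrank ℂ (V (k+1) l) := hdimk1.symm
        apply hO (k+1) l (by omega) hkl hsum hne
        rw [InZ, if_neg (by omega)]
        simpa using heq2

end Aux


section Main

variable {n i j : ℕ} {V : ℕ → ℕ → Submodule ℂ (Wsp n)}

set_option maxHeartbeats 2000000 in
lemma mainP (hV : IsSpR n V)
    (hO : ∀ k l, 1 ≤ k → k ≤ l → k + l ≤ 2*n → (k, l) ≠ (i, j) → ¬ InZ n V k l) :
    ∀ N k l, 2*n*k + (2*n - l) ≤ N → 1 ≤ k → k ≤ l → k + l ≤ 2*n → j < l →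
      ∀ v ∈ V k l, v ∈ WIJ n 0 l → v = 0 := by
  intro N
  induction N with
  | zero =>
    intro k l hm hk hkl hsum hjl v hv hvW
    exfalso
    have h1 : 0 < 2*n*k := Nat.mul_pos (by omega) (by omega)
    omega
  | succ N IH =>
    intro k l hm hk hkl hsum hjl v hv hvW
    have hn1 : 1 ≤ n := by omega
    have hl2n : l < 2*n := by omega
    have hc : ∀ a : Fin (2*n), (a:ℕ) < l → v a = 0 := fun a ha =>
      (mem_WIJ n 0 l v).1 hvW a (Nat.zero_le _) ha
    -- Step 1: the projection of v along w_{l+1} vanishes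
    have h0 : prj n (l+1) v = 0 := by
      by_cases hwall : k + l = 2*n
      · -- wall case: use isotropy
        have hupper : ∀ a : Fin (2*n), l < (a:ℕ) → v a = 0 := by
          intro a hla
          have hk2 : 2 ≤ k := by omega
          set m := k - 1 with hmdef
          have hm1 : 1 ≤ m := by omega
          have hmul : 2*n*m + 2*n = 2*n*k := by
            have hmk : m + 1 = k := by omega
            rw [← hmk, Nat.mul_succ]
          have hmeas : 2*n*m + (2*n - l) ≤ N := by omega
          have hVm_sub := hV.sub m l hm1 (by omega) (by omega)
          have hVmono : V m l ≤ V k l := by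
            have h := hV.mono m l hm1 (by omega) (by omega)
            rwa [show m + 1 = k by omega] at h
          have hklt : m < l := by omega
          -- the coordinate map on V m l is bijective onto ℂ^m
          let e : Fin m → Fin (2*n) := fun b => ⟨(b:ℕ), by omega⟩
          let ψ : V m l →ₗ[ℂ] (Fin m → ℂ) :=
            (LinearMap.funLeft ℂ ℂ e) ∘ₗ (V m l).subtype
          have hψ : ∀ (u : V m l) (b : Fin m), ψ u b = (u : Wsp n) ⟨(b:ℕ), by omega⟩ := by
            intro u b; rfl
          have hker : ∀ u : V m l, ψ u = 0 → u = 0 := by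
            intro u hu
            apply Subtype.ext
            apply IH m l hmeas hm1 (by omega) (by omega) hjl u.1 u.2
            rw [mem_WIJ]
            intro b _ hb
            by_cases hbm : (b:ℕ) < m
            · have h := congrFun hu ⟨(b:ℕ), hbm⟩
              rw [hψ u ⟨(b:ℕ), hbm⟩] at h
              simpa using h
            · exact (mem_WIJ n m l _).1 (hVm_sub u.2) b (by omega) hb
          have hinj : Function.Injective ψ := by
            rw [← LinearMap.ker_eq_bot, Submodule.eq_bot_iff]
            intro x hx
            exact hker x (LinearMap.mem_ker.1 hx)
          have hrange : LinearMap.range ψ = ⊤ := by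
            apply Submodule.eq_top_of_finrank_eq
            rw [LinearMap.finrank_range_of_inj hinj,
              hV.dim m l hm1 (by omega) (by omega), Module.finrank_pi]
            simp
          set b : Fin m := ⟨2*n - 1 - (a:ℕ), by omega⟩ with hbdef
          obtain ⟨u, hu⟩ := LinearMap.range_eq_top.1 hrange (Pi.single b 1)
          have hiso := hV.isot k hk (by omega)
          rw [show 2*n - k = l by omega] at hiso
          have hform : sform n v (u : Wsp n) = 0 := hiso v hv (u : Wsp n) (hVmono u.2)
          have hsingle : sform n v (u : Wsp n)
              = (if (a:ℕ) < n then 1 else -1) * v a *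
                (u : Wsp n) ⟨2*n - 1 - (a:ℕ), by omega⟩ := by
            rw [sform, Finset.sum_eq_single a]
            · intro q _ hqa
              by_cases hql : (q:ℕ) < l
              · rw [hc q hql]; ring
              · have hqa' : (q:ℕ) ≠ (a:ℕ) := fun h => hqa (Fin.ext h)
                have hu0 : (u : Wsp n) ⟨2*n - 1 - (q:ℕ), by omega⟩ = 0 := by
                  by_cases hc2 : 2*n - 1 - (q:ℕ) < m
                  · have h := congrFun hu ⟨2*n - 1 - (q:ℕ), hc2⟩
                    rw [hψ u ⟨2*n - 1 - (q:ℕ), hc2⟩] at h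
                    rw [h, Pi.single_apply, if_neg]
                    intro hcb
                    have : 2*n - 1 - (q:ℕ) = 2*n - 1 - (a:ℕ) := by
                      have := congrArg Fin.val hcb
                      simpa [hbdef] using this
                    omega
                  · exact (mem_WIJ n m l _).1 (hVm_sub u.2) _ (by simp; omega) (by simp; omega)
                rw [hu0]; ring
            · intro h; exact absurd (Finset.mem_univ a) h
          have hub : (u : Wsp n) ⟨2*n - 1 - (a:ℕ), by omega⟩ = 1 := by
            have h := congrFun hu b
            rw [hψ u b] at h
            rw [show (⟨2*n - 1 - (a:ℕ), by omega⟩ : Fin (2*n)) = ⟨(b:ℕ), by omega⟩ from rfl]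
            rw [h, Pi.single_apply, if_pos rfl]
          rw [hsingle, hub, mul_one] at hform
          rcases lt_or_ge (a:ℕ) n with h | h
          · rw [if_pos h, one_mul] at hform; exact hform
          · rw [if_neg (by omega), neg_one_mul, neg_eq_zero] at hform; exact hform
        funext a
        rw [prj_apply]
        by_cases ha : (a:ℕ) + 1 = l + 1
        · rw [if_pos ha]; rfl
        · rw [if_neg ha]
          rcases lt_or_ge (a:ℕ) l with h | h
          · exact hc a h
          · exact hupper a (by omega)
      · -- non-wall: project forward and use IH
        have hmem : prj n (l+1) v ∈ V k (l+1) :=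
          hV.proj k l hk hkl (by omega) (Submodule.mem_map_of_mem hv)
        have hWmem : prj n (l+1) v ∈ WIJ n 0 (l+1) := by
          rw [mem_WIJ]
          intro a _ ha
          rw [prj_apply]
          by_cases h : (a:ℕ) + 1 = l + 1
          · rw [if_pos h]
          · rw [if_neg h]; exact hc a (by omega)
        exact IH k (l+1) (by omega) hk (by omega) (by omega) (by omega) _ hmem hWmem
    -- Step 2: so v is a multiple of w_{l+1}; it must be 0, else w_{l+1} ∈ V k l
    rcases eq_or_ne (v ⟨l, hl2n⟩) 0 with hvl | hvl
    · have hd := prj_decomp n l hl2n v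
      rw [h0, hvl, zero_smul, add_zero] at hd
      exact hd
    · exfalso
      apply notw hV hO k l hk hkl hsum (by omega)
      have hd := prj_decomp n l hl2n v
      rw [h0, zero_add] at hd
      set c := v ⟨l, hl2n⟩ with hcdef
      have : wvec n (l+1) = c⁻¹ • v := by
        rw [hd, smul_smul, inv_mul_cancel₀ hvl, one_smul]
      rw [this]
      exact Submodule.smul_mem _ _ hv

end Main

theorem statement15 (n i j : ℕ) (hn : 1 ≤ n) (hi : 1 ≤ i) (hij : i ≤ j)
    (hjn : j < n)
    (V : ℕ → ℕ → Submodule ℂ (Wsp n)) (hV : IsSpR n V) (hZ : InZ n V i j)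
    (hO : ∀ k l, 1 ≤ k → k ≤ l → k + l ≤ 2*n → (k, l) ≠ (i, j) → ¬ InZ n V k l) :
    ∀ k l, 1 ≤ k → k ≤ l → k + l ≤ 2*n → j < l → V k l ⊓ WIJ n 0 l = ⊥ := by
  intro k l hk hkl hsum hjl
  rw [Submodule.eq_bot_iff]
  intro x hx
  rw [Submodule.mem_inf] at hx
  exact mainP hV hO (2*n*k + (2*n - l)) k l le_rfl hk hkl hsum hjl x hx.1 hx.2
end
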